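/- Let 0 < α ≤ 1 and define, for t > 0, E_α(t^α) = Σ_{k=0}^∞ t^(αk) / Γ(1 + kα), where the powers are real powers (rpow) and Γ is the real Gamma function. Then for all real x, y > 0 one has E_α(((x+y)/2)^α) ≤ (E_α(x^α) + E_α(y^α)) / 2^α. -/

import Mathlib

open scoped BigOperators

/-- The Mittag-Leffler type value `E_α(t^α) = ∑_{k=0}^∞ t^(αk) / Γ(1 + kα)`. -/
noncomputable def mittagLeffler (α t : ℝ) : ℝ :=
  ∑' k : ℕ, t ^ (α * (k : ℝ)) / Real.Gamma (1 + (k : ℝ) * α)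

lemma ml_step (α t : ℝ) (hα : 0 < α) (ht : 0 < t) (q : ℕ) (hq : 1 ≤ (q : ℝ) * α) (k : ℕ) :
    t ^ (α * ((k + q : ℕ) : ℝ)) / Real.Gamma (1 + ((k + q : ℕ) : ℝ) * α)
      ≤ (t ^ (α * (k : ℝ)) / Real.Gamma (1 + (k : ℝ) * α)) * (t ^ (α * q) / (1 + k * α)) := by
  have hkα : (0:ℝ) ≤ (k : ℝ) * α := by positivity
  have h1 : (0:ℝ) < 1 + (k : ℝ) * α := by linarith
  have hG1 : 0 < Real.Gamma (1 + (k : ℝ) * α) := Real.Gamma_pos_of_pos h1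
  have hmono : (1 + (k : ℝ) * α) * Real.Gamma (1 + (k : ℝ) * α)
      ≤ Real.Gamma (1 + ((k + q : ℕ) : ℝ) * α) := by
    have e1 : (1 + (k : ℝ) * α) * Real.Gamma (1 + (k : ℝ) * α)
        = Real.Gamma ((1 + (k : ℝ) * α) + 1) := (Real.Gamma_add_one h1.ne').symm
    rw [e1]
    rcases eq_or_lt_of_le (show (1 + (k : ℝ) * α) + 1 ≤ 1 + ((k + q : ℕ) : ℝ) * α by
      push_cast; nlinarith) with h | h
    · rw [h]
    · exact (Real.Gamma_strictMonoOn_Ici (Set.mem_Ici.mpr (by linarith))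
        (Set.mem_Ici.mpr (by nlinarith)) h).le
  have hGq : 0 < Real.Gamma (1 + ((k + q : ℕ) : ℝ) * α) := Real.Gamma_pos_of_pos (by positivity)
  have hnum : t ^ (α * ((k + q : ℕ) : ℝ)) = t ^ (α * (k : ℝ)) * t ^ (α * q) := by
    rw [← Real.rpow_add ht]; push_cast; ring_nf
  rw [hnum, div_le_iff₀ hGq]
  have key : (t ^ (α * (k : ℝ)) / Real.Gamma (1 + (k : ℝ) * α)) * (t ^ (α * q) / (1 + k * α))
      * ((1 + (k : ℝ) * α) * Real.Gamma (1 + (k : ℝ) * α)) = t ^ (α * (k : ℝ)) * t ^ (α * q) := by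
    field_simp
  calc t ^ (α * (k : ℝ)) * t ^ (α * q)
      = (t ^ (α * (k : ℝ)) / Real.Gamma (1 + (k : ℝ) * α)) * (t ^ (α * q) / (1 + k * α))
        * ((1 + (k : ℝ) * α) * Real.Gamma (1 + (k : ℝ) * α)) := key.symm
    _ ≤ _ := by
        apply mul_le_mul_of_nonneg_left hmono
        positivity

lemma summable_ml (α : ℝ) (hα : 0 < α) (t : ℝ) (ht : 0 < t) :
    Summable (fun k : ℕ => t ^ (α * (k : ℝ)) / Real.Gamma (1 + (k : ℝ) * α)) := by
  set f : ℕ → ℝ := fun k => t ^ (α * (k : ℝ)) / Real.Gamma (1 + (k : ℝ) * α) with hf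
  have hfpos : ∀ k, 0 < f k := fun k => by
    have : (0:ℝ) < 1 + (k : ℝ) * α := by positivity
    exact div_pos (Real.rpow_pos_of_pos ht _) (Real.Gamma_pos_of_pos this)
  set q : ℕ := ⌈1/α⌉₊ with hqdef
  have hq : 1 ≤ (q : ℝ) * α := by
    have h1 : (1/α : ℝ) ≤ q := Nat.le_ceil _
    calc (1:ℝ) = (1/α) * α := by field_simp
      _ ≤ q * α := by apply mul_le_mul_of_nonneg_right h1 hα.le
  have hq0 : q ≠ 0 := by
    rintro h; rw [h] at hq; simp at hq; linarith
  haveI : NeZero q := ⟨hq0⟩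
  -- each fiber (fun j => f (j * q + i)) is summable by the ratio test
  have hfiber : ∀ i : Fin q, Summable (fun j : ℕ => f (j * q + i)) := by
    intro i
    apply summable_of_ratio_norm_eventually_le (r := 1/2) (by norm_num)
    have hev : ∀ᶠ j : ℕ in Filter.atTop, 2 * t ^ (α * q) ≤ 1 + (j : ℝ) * ((q : ℝ) * α) := by
      have : Filter.Tendsto (fun j : ℕ => 1 + (j : ℝ) * ((q : ℝ) * α)) Filter.atTop Filter.atTop := by
        apply Filter.tendsto_atTop_add_const_left
        exact Filter.Tendsto.atTop_mul_const (by positivity) tendsto_natCast_atTop_atTop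
      exact this.eventually_ge_atTop _
    filter_upwards [hev] with j hj
    have hstep := ml_step α t hα ht q hq (j * q + i)
    have heq : (j + 1) * q + (i : ℕ) = (j * q + i) + q := by ring
    rw [heq]
    have h2 : t ^ (α * q) / (1 + ((j * q + i : ℕ) : ℝ) * α) ≤ 1/2 := by
      have hd : (0:ℝ) < 1 + ((j * q + i : ℕ) : ℝ) * α := by positivity
      rw [div_le_iff₀ hd]
      have : 1 + (j : ℝ) * ((q : ℝ) * α) ≤ 1 + ((j * q + i : ℕ) : ℝ) * α := by
        push_cast
        have : ((i : ℕ) : ℝ) * α ≥ 0 := by positivity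
        nlinarith
      nlinarith
    have hnn : 0 ≤ f (j * q + i) := (hfpos _).le
    have : f ((j * q + i) + q) ≤ f (j * q + i) * (1/2) := by
      calc f ((j * q + i) + q) ≤ f (j * q + i) * (t ^ (α * q) / (1 + ((j * q + i : ℕ) : ℝ) * α)) :=
            hstep
        _ ≤ f (j * q + i) * (1/2) := mul_le_mul_of_nonneg_left h2 hnn
    rw [Real.norm_of_nonneg (hfpos _).le, Real.norm_of_nonneg (hfpos _).le]
    linarith
  -- assemble via the div/mod equivalence
  have hsum2 : Summable (fun p : ℕ × Fin q => f (p.1 * q + (p.2 : ℕ))) := by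
    refine (summable_prod_of_nonneg (fun p => (hfpos _).le)).mpr ⟨?_, ?_⟩
    · intro j; exact .of_finite
    · have heq : ∀ j : ℕ, ∑' i : Fin q, f (j * q + (i : ℕ)) = ∑ i : Fin q, f (j * q + i) := by
        intro j; rw [tsum_fintype]
      simp only [heq]
      exact summable_sum (fun i _ => hfiber i)
  exact (Equiv.summable_iff (Nat.divModEquiv q).symm).mp hsum2

lemma ml_termwise (α p x y : ℝ) (hα : 0 < α) (hα1 : α ≤ 1) (hx : 0 < x) (hy : 0 < y)
    (hp : p = 0 ∨ α ≤ p) : ((x + y) / 2) ^ p ≤ (x ^ p + y ^ p) / (2:ℝ) ^ α := by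
  have h2α : (0:ℝ) < (2:ℝ) ^ α := Real.rpow_pos_of_pos (by norm_num) _
  have h2α2 : (2:ℝ) ^ α ≤ 2 := by
    calc (2:ℝ) ^ α ≤ (2:ℝ) ^ (1:ℝ) := Real.rpow_le_rpow_of_exponent_le one_le_two hα1
      _ = 2 := Real.rpow_one 2
  rcases hp with rfl | hαp
  · simp only [Real.rpow_zero]
    rw [le_div_iff₀ h2α]; linarith
  · have hp0 : 0 < p := lt_of_lt_of_le hα hαp
    rcases le_or_gt p 1 with hp1 | hp1
    · -- subadditivity case
      have h1 : (x + y) ^ p ≤ x ^ p + y ^ p := by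
        have h := NNReal.rpow_add_le_add_rpow x.toNNReal y.toNNReal hp0.le hp1
        have h' := NNReal.coe_le_coe.2 h
        push_cast at h'
        rwa [Real.coe_toNNReal _ hx.le, Real.coe_toNNReal _ hy.le] at h'
      have h2 : (2:ℝ) ^ α ≤ (2:ℝ) ^ p := Real.rpow_le_rpow_of_exponent_le one_le_two hαp
      calc ((x + y) / 2) ^ p = (x + y) ^ p / (2:ℝ) ^ p :=
            Real.div_rpow (by linarith : (0:ℝ) ≤ x + y) (by norm_num : (0:ℝ) ≤ (2:ℝ)) p
        _ ≤ (x ^ p + y ^ p) / (2:ℝ) ^ p := by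
            exact (div_le_div_iff_of_pos_right (by positivity)).mpr h1
        _ ≤ (x ^ p + y ^ p) / (2:ℝ) ^ α := by
            apply div_le_div_of_nonneg_left _ h2α h2
            positivity
    · -- convexity case
      have h1 : ((x + y) / 2) ^ p ≤ (x ^ p + y ^ p) / 2 := by
        have h := NNReal.rpow_arith_mean_le_arith_mean2_rpow (1/2) (1/2)
          x.toNNReal y.toNNReal (add_halves 1) hp1.le
        have h' := NNReal.coe_le_coe.2 h
        push_cast [NNReal.coe_rpow, Real.coe_toNNReal _ hx.le, Real.coe_toNNReal _ hy.le] at h'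
        calc ((x + y) / 2) ^ p = ((1/2 : ℝ) * x + (1/2 : ℝ) * y) ^ p := by ring_nf
          _ ≤ (1/2 : ℝ) * x ^ p + (1/2 : ℝ) * y ^ p := h'
          _ = (x ^ p + y ^ p) / 2 := by ring
      calc ((x + y) / 2) ^ p ≤ (x ^ p + y ^ p) / 2 := h1
        _ ≤ (x ^ p + y ^ p) / (2:ℝ) ^ α := by
            apply div_le_div_of_nonneg_left _ h2α h2α2
            positivity

theorem stmt_9 (α : ℝ) (hα : 0 < α) (hα1 : α ≤ 1) (x y : ℝ) (hx : 0 < x) (hy : 0 < y) :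
    mittagLeffler α ((x + y) / 2) ≤ (mittagLeffler α x + mittagLeffler α y) / (2:ℝ) ^ α := by
  have hm : 0 < (x + y) / 2 := by linarith
  have hsx := summable_ml α hα x hx
  have hsy := summable_ml α hα y hy
  have hsm := summable_ml α hα ((x + y) / 2) hm
  have hterm : ∀ k : ℕ, ((x + y) / 2) ^ (α * (k : ℝ)) / Real.Gamma (1 + (k : ℝ) * α)
      ≤ (x ^ (α * (k : ℝ)) / Real.Gamma (1 + (k : ℝ) * α)
        + y ^ (α * (k : ℝ)) / Real.Gamma (1 + (k : ℝ) * α)) / (2:ℝ) ^ α := by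
    intro k
    have hG : 0 < Real.Gamma (1 + (k : ℝ) * α) := Real.Gamma_pos_of_pos (by positivity)
    have h2α : (0:ℝ) < (2:ℝ) ^ α := Real.rpow_pos_of_pos (by norm_num) _
    have hp : (α * (k : ℝ) = 0) ∨ α ≤ α * (k : ℝ) := by
      rcases Nat.eq_zero_or_pos k with rfl | hk
      · left; simp
      · right
        have : (1:ℝ) ≤ (k : ℝ) := by exact_mod_cast hk
        nlinarith
    have key := ml_termwise α (α * (k : ℝ)) x y hα hα1 hx hy hp
    rw [le_div_iff₀ h2α] at key
    rw [div_le_div_iff₀ hG h2α]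
    have hS : (x ^ (α * (k : ℝ)) / Real.Gamma (1 + (k : ℝ) * α)
        + y ^ (α * (k : ℝ)) / Real.Gamma (1 + (k : ℝ) * α)) * Real.Gamma (1 + (k : ℝ) * α)
        = x ^ (α * (k : ℝ)) + y ^ (α * (k : ℝ)) := by field_simp
    rw [hS]
    exact key
  have hRHS : Summable (fun k : ℕ => (x ^ (α * (k : ℝ)) / Real.Gamma (1 + (k : ℝ) * α)
      + y ^ (α * (k : ℝ)) / Real.Gamma (1 + (k : ℝ) * α)) / (2:ℝ) ^ α) :=
    (hsx.add hsy).div_const _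
  have hle := Summable.tsum_le_tsum hterm hsm hRHS
  unfold mittagLeffler
  calc (∑' k : ℕ, ((x + y) / 2) ^ (α * (k : ℝ)) / Real.Gamma (1 + (k : ℝ) * α))
      ≤ ∑' k : ℕ, (x ^ (α * (k : ℝ)) / Real.Gamma (1 + (k : ℝ) * α)
        + y ^ (α * (k : ℝ)) / Real.Gamma (1 + (k : ℝ) * α)) / (2:ℝ) ^ α := hle
    _ = (∑' k : ℕ, (x ^ (α * (k : ℝ)) / Real.Gamma (1 + (k : ℝ) * α)
        + y ^ (α * (k : ℝ)) / Real.Gamma (1 + (k : ℝ) * α))) / (2:ℝ) ^ α := by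
        rw [tsum_div_const]
    _ = ((∑' k : ℕ, x ^ (α * (k : ℝ)) / Real.Gamma (1 + (k : ℝ) * α))
        + ∑' k : ℕ, y ^ (α * (k : ℝ)) / Real.Gamma (1 + (k : ℝ) * α)) / (2:ℝ) ^ α := by
        rw [Summable.tsum_add hsx hsy]
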